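/- arXiv:2010.08828 — 2 statements merged into one kernel-verified Lean document; each statement's English description precedes it below -/
import Mathlib

section
/- Let G be a finite simple graph on n vertices with a magnetic potential α, and let G' = G - e₀ be the graph obtained from G by deleting a single edge e₀, with α' the restriction of α to the arcs of G'. Then the eigenvalues interlace: λ_k(Δ_{α'}^{G'}) ≤ λ_k(Δ_α^G) for all 1 ≤ k ≤ n, and λ_k(Δ_α^G) ≤ λ_{k+1}(Δ_{α'}^{G'}) for all 1 ≤ k ≤ n-1. -/
open Classical in
/-- The discrete magnetic Laplacian of a simple graph `G` on `Fin n` with magnetic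
potential `α`. -/
noncomputable def magLap {n : ℕ} (G : SimpleGraph (Fin n)) (α : Fin n → Fin n → ℝ) :
    Matrix (Fin n) (Fin n) ℂ :=
  Matrix.of fun u v =>
    if u = v then ((G.neighborSet u).ncard : ℂ)
    else if G.Adj u v then -Complex.exp (α u v * Complex.I) else 0

lemma magLap_isHermitian {n : ℕ} (G : SimpleGraph (Fin n)) (α : Fin n → Fin n → ℝ)
    (hα : ∀ u v, α v u = -α u v) : (magLap G α).IsHermitian := by
  rw [Matrix.IsHermitian]
  ext u v
  simp only [Matrix.conjTranspose_apply, magLap, Matrix.of_apply]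
  by_cases huv : u = v
  · subst huv; simp
  · have hvu : ¬ v = u := fun h => huv h.symm
    rw [if_neg hvu, if_neg huv]
    by_cases hadj : G.Adj u v
    · rw [if_pos hadj.symm, if_pos hadj, star_neg]
      have h1 : star (Complex.exp ((α v u : ℂ) * Complex.I)) =
          Complex.exp ((starRingEnd ℂ) ((α v u : ℂ) * Complex.I)) :=
        (Complex.exp_conj _).symm
      rw [h1]
      congr 1
      rw [hα u v]
      simp [map_mul, Complex.conj_ofReal, Complex.conj_I]
    · rw [if_neg (fun h => hadj h.symm), if_neg hadj, star_zero]

/-- The `k`-th smallest eigenvalue (1-indexed, with multiplicity) of a Hermitian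
matrix, as an extended real number; `⊥` for `k = 0` and `⊤` for `k > n`. -/
noncomputable def lamb {n : ℕ} {A : Matrix (Fin n) (Fin n) ℂ} (hA : A.IsHermitian) (k : ℕ) :
    EReal :=
  if h : 1 ≤ k ∧ k ≤ n then
    (((hA.eigenvalues ∘ Tuple.sort hA.eigenvalues) ⟨k - 1, by omega⟩ : ℝ) : EReal)
  else if k = 0 then ⊥ else ⊤


section Aux
open Matrix
variable {n : ℕ}



section CF
variable (T : EuclideanSpace ℂ (Fin n) →ₗ[ℂ] EuclideanSpace ℂ (Fin n)) (hT : T.IsSymmetric)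
  (b : OrthonormalBasis (Fin n) ℂ (EuclideanSpace ℂ (Fin n)))
  (μ : Fin n → ℝ) (hTb : ∀ i, T (b i) = (μ i : ℂ) • b i)

include hT hTb in
theorem repr_T (x : EuclideanSpace ℂ (Fin n)) (i : Fin n) :
    b.repr (T x) i = (μ i : ℂ) * b.repr x i := by
  rw [b.repr_apply_apply, b.repr_apply_apply, ← hT (b i) x, hTb i]
  simp only [inner_smul_left, Complex.conj_ofReal]

include hT hTb in
theorem quad_eq (x : EuclideanSpace ℂ (Fin n)) :
    (inner ℂ x (T x) : ℂ).re = ∑ i, μ i * ‖b.repr x i‖ ^ 2 := by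
  have h1 : (inner ℂ x (T x) : ℂ) = inner ℂ (b.repr x) (b.repr (T x)) :=
    (b.repr.inner_map_map x (T x)).symm
  rw [h1, PiLp.inner_apply]
  have h2 : ∀ i : Fin n, (inner ℂ (b.repr x i) (b.repr (T x) i) : ℂ)
      = ((μ i * ‖b.repr x i‖ ^ 2 : ℝ) : ℂ) := by
    intro i
    rw [RCLike.inner_apply, repr_T T hT b μ hTb x i]
    rw [show (μ i : ℂ) * b.repr x i * (starRingEnd ℂ) (b.repr x i)
      = (μ i : ℂ) * ((starRingEnd ℂ) (b.repr x i) * b.repr x i) by ring]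
    rw [Complex.conj_mul']
    push_cast
    ring
  rw [Finset.sum_congr rfl fun i _ => h2 i, ← Complex.ofReal_sum, Complex.ofReal_re]

theorem normsq_eq (x : EuclideanSpace ℂ (Fin n)) : ‖x‖ ^ 2 = ∑ i, ‖b.repr x i‖ ^ 2 := by
  rw [← b.repr.norm_map x, EuclideanSpace.norm_eq, Real.sq_sqrt (by positivity)]

theorem repr_eq_zero_of_mem_span {s : Set (Fin n)} {x : EuclideanSpace ℂ (Fin n)}
    (hx : x ∈ Submodule.span ℂ (b '' s)) {i : Fin n} (hi : i ∉ s) : b.repr x i = 0 := by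
  rw [b.repr_apply_apply]
  have : Submodule.span ℂ (b '' s) ≤ LinearMap.ker ((innerSL ℂ (b i)).toLinearMap) := by
    rw [Submodule.span_le]
    rintro _ ⟨j, hj, rfl⟩
    simp only [SetLike.mem_coe, LinearMap.mem_ker, ContinuousLinearMap.coe_coe, innerSL_apply_apply]
    exact b.orthonormal.2 (fun h => hi (h ▸ hj))
  exact this hx

theorem finrank_span_image (s : Finset (Fin n)) :
    Module.finrank ℂ (Submodule.span ℂ (b '' (s : Set (Fin n)))) = s.card := by
  classical
  rw [Set.image_eq_range]
  have : (fun (x : (s : Set (Fin n))) => b ↑x) = (⇑b ∘ Subtype.val) := rfl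
  rw [this, finrank_span_eq_card (b.orthonormal.linearIndependent.comp _ Subtype.val_injective)]
  simp

include hT hTb in
theorem cf_upper (hμ : Monotone μ) (k : Fin n) :
    ∀ x ∈ Submodule.span ℂ (b '' (Finset.Iic k : Finset (Fin n))),
      (inner ℂ x (T x) : ℂ).re ≤ μ k * ‖x‖ ^ 2 := by
  intro x hx
  rw [quad_eq T hT b μ hTb x, normsq_eq b x, Finset.mul_sum]
  refine Finset.sum_le_sum fun i _ => ?_
  by_cases hik : i ≤ k
  · exact mul_le_mul_of_nonneg_right (hμ hik) (by positivity)
  · have h0 : b.repr x i = 0 :=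
      repr_eq_zero_of_mem_span b hx (by simpa using hik)
    simp [h0]

include hT hTb in
theorem cf_lower (hμ : Monotone μ) (k : Fin n) (U : Submodule ℂ (EuclideanSpace ℂ (Fin n)))
    (hU : (k : ℕ) + 1 ≤ Module.finrank ℂ U) :
    ∃ x ∈ U, x ≠ 0 ∧ μ k * ‖x‖ ^ 2 ≤ (inner ℂ x (T x) : ℂ).re := by
  classical
  set W := Submodule.span ℂ (b '' (Finset.Ici k : Finset (Fin n))) with hW
  have hWrank : Module.finrank ℂ W = n - k := by
    rw [hW, finrank_span_image b, Fin.card_Ici]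
  have hinf : (U ⊓ W) ≠ ⊥ := by
    intro hbot
    have h1 := Submodule.finrank_sup_add_finrank_inf_eq U W
    rw [hbot, finrank_bot, add_zero] at h1
    have h2 : Module.finrank ℂ ↥(U ⊔ W) ≤ n := by
      have := Submodule.finrank_le (U ⊔ W)
      rwa [finrank_euclideanSpace_fin] at this
    have hkn : (k : ℕ) < n := k.isLt
    omega
  obtain ⟨x, hx, hx0⟩ := Submodule.exists_mem_ne_zero_of_ne_bot hinf
  refine ⟨x, hx.1, hx0, ?_⟩
  rw [quad_eq T hT b μ hTb x, normsq_eq b x, Finset.mul_sum]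
  refine Finset.sum_le_sum fun i _ => ?_
  by_cases hik : k ≤ i
  · exact mul_le_mul_of_nonneg_right (hμ hik) (by positivity)
  · have h0 : b.repr x i = 0 :=
      repr_eq_zero_of_mem_span b hx.2 (by simpa using hik)
    simp [h0]

end CF

theorem interlace_le (TA TD : EuclideanSpace ℂ (Fin n) →ₗ[ℂ] EuclideanSpace ℂ (Fin n))
    (hTA : TA.IsSymmetric) (hTM : (TA + TD).IsSymmetric)
    (bA bM : OrthonormalBasis (Fin n) ℂ (EuclideanSpace ℂ (Fin n)))
    (μA μM : Fin n → ℝ) (hμA : Monotone μA) (hμM : Monotone μM)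
    (hAe : ∀ i, TA (bA i) = (μA i : ℂ) • bA i)
    (hMe : ∀ i, (TA + TD) (bM i) = (μM i : ℂ) • bM i)
    (hD : ∀ x, 0 ≤ (inner ℂ x (TD x) : ℂ).re) (k : Fin n) : μA k ≤ μM k := by
  classical
  set U := Submodule.span ℂ (bM '' (Finset.Iic k : Finset (Fin n))) with hU
  have hUrank : (k : ℕ) + 1 ≤ Module.finrank ℂ U := by
    rw [hU, finrank_span_image bM, Fin.card_Iic]
  obtain ⟨x, hxU, hx0, hlow⟩ := cf_lower TA hTA bA μA hAe hμA k U hUrank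
  have hup := cf_upper (TA + TD) hTM bM μM hMe hμM k x hxU
  have hsum : (inner ℂ x ((TA + TD) x) : ℂ).re
      = (inner ℂ x (TA x) : ℂ).re + (inner ℂ x (TD x) : ℂ).re := by
    rw [LinearMap.add_apply, inner_add_right, Complex.add_re]
  have hchain : μA k * ‖x‖ ^ 2 ≤ μM k * ‖x‖ ^ 2 := by
    have := hD x
    calc μA k * ‖x‖ ^ 2 ≤ (inner ℂ x (TA x) : ℂ).re := hlow
    _ ≤ (inner ℂ x ((TA + TD) x) : ℂ).re := by rw [hsum]; linarith
    _ ≤ μM k * ‖x‖ ^ 2 := hup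
  have hxn : (0:ℝ) < ‖x‖ := norm_pos_iff.mpr hx0
  have hx2 : (0 : ℝ) < ‖x‖ ^ 2 := by positivity
  exact le_of_mul_le_mul_right hchain hx2

theorem interlace_ge (TA TD : EuclideanSpace ℂ (Fin n) →ₗ[ℂ] EuclideanSpace ℂ (Fin n))
    (hTA : TA.IsSymmetric) (hTM : (TA + TD).IsSymmetric)
    (bA bM : OrthonormalBasis (Fin n) ℂ (EuclideanSpace ℂ (Fin n)))
    (μA μM : Fin n → ℝ) (hμA : Monotone μA) (hμM : Monotone μM)
    (hAe : ∀ i, TA (bA i) = (μA i : ℂ) • bA i)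
    (hMe : ∀ i, (TA + TD) (bM i) = (μM i : ℂ) • bM i)
    (φ : EuclideanSpace ℂ (Fin n) →ₗ[ℂ] ℂ)
    (hD : ∀ x, (inner ℂ x (TD x) : ℂ).re = ‖φ x‖ ^ 2)
    (k : Fin n) (hk : (k : ℕ) + 1 < n) : μM k ≤ μA ⟨(k : ℕ) + 1, hk⟩ := by
  classical
  set k' : Fin n := ⟨(k : ℕ) + 1, hk⟩ with hk'
  set U := Submodule.span ℂ (bA '' (Finset.Iic k' : Finset (Fin n))) with hU
  have hUrank : Module.finrank ℂ U = (k : ℕ) + 2 := by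
    rw [hU, finrank_span_image bA, Fin.card_Iic]
  set K := LinearMap.ker (φ.domRestrict U) with hK
  have hKrank : (k : ℕ) + 1 ≤ Module.finrank ℂ K := by
    rw [hK]
    have h1 := LinearMap.finrank_range_add_finrank_ker (φ.domRestrict U)
    have h2 : Module.finrank ℂ (LinearMap.range (φ.domRestrict U)) ≤ 1 := by
      have := Submodule.finrank_le (LinearMap.range (φ.domRestrict U))
      rwa [Module.finrank_self] at this
    rw [hUrank] at h1
    omega
  set S := K.map U.subtype with hS
  have hSrank : (k : ℕ) + 1 ≤ Module.finrank ℂ S := by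
    rwa [hS, Submodule.finrank_map_subtype_eq]
  obtain ⟨x, hxS, hx0, hlow⟩ := cf_lower (TA + TD) hTM bM μM hMe hμM k S hSrank
  obtain ⟨⟨u, huU⟩, huK, rfl⟩ := hxS
  have hφ0 : φ u = 0 := huK
  have hup := cf_upper TA hTA bA μA hAe hμA k' u huU
  have hsum : (inner ℂ u ((TA + TD) u) : ℂ).re
      = (inner ℂ u (TA u) : ℂ).re + (inner ℂ u (TD u) : ℂ).re := by
    rw [LinearMap.add_apply, inner_add_right, Complex.add_re]
  have hDu : (inner ℂ u (TD u) : ℂ).re = 0 := by rw [hD u, hφ0]; simp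
  have hchain : μM k * ‖u‖ ^ 2 ≤ μA k' * ‖u‖ ^ 2 := by
    calc μM k * ‖u‖ ^ 2 ≤ (inner ℂ u ((TA + TD) u) : ℂ).re := hlow
    _ = (inner ℂ u (TA u) : ℂ).re := by rw [hsum, hDu, add_zero]
    _ ≤ μA k' * ‖u‖ ^ 2 := hup
  have hx2 : (0 : ℝ) < ‖u‖ ^ 2 := by
    have h1 : (u : EuclideanSpace ℂ (Fin n)) ≠ 0 := by simpa using hx0
    have h2 : (0:ℝ) < ‖(u : EuclideanSpace ℂ (Fin n))‖ := norm_pos_iff.mpr h1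
    positivity
  exact le_of_mul_le_mul_right hchain hx2


noncomputable def sortedEigBasis {A : Matrix (Fin n) (Fin n) ℂ} (hA : A.IsHermitian) :
    OrthonormalBasis (Fin n) ℂ (EuclideanSpace ℂ (Fin n)) :=
  hA.eigenvectorBasis.reindex (Tuple.sort hA.eigenvalues).symm

noncomputable def sortedEig {A : Matrix (Fin n) (Fin n) ℂ} (hA : A.IsHermitian) : Fin n → ℝ :=
  hA.eigenvalues ∘ Tuple.sort hA.eigenvalues

theorem sortedEig_monotone {A : Matrix (Fin n) (Fin n) ℂ} (hA : A.IsHermitian) :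
    Monotone (sortedEig hA) := Tuple.monotone_sort _

theorem sortedEig_apply {A : Matrix (Fin n) (Fin n) ℂ} (hA : A.IsHermitian) (i : Fin n) :
    Matrix.toEuclideanLin A (sortedEigBasis hA i) = (sortedEig hA i : ℂ) • sortedEigBasis hA i := by
  have hb : sortedEigBasis hA i = hA.eigenvectorBasis (Tuple.sort hA.eigenvalues i) := by
    simp [sortedEigBasis]
  rw [hb]
  have h := hA.mulVec_eigenvectorBasis (Tuple.sort hA.eigenvalues i)
  rw [Matrix.toEuclideanLin_apply]
  ext j
  have := congrFun h j
  simp only [Pi.smul_apply, smul_eq_mul] at this ⊢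
  simpa [sortedEig] using this

theorem lamb_eq {A : Matrix (Fin n) (Fin n) ℂ} (hA : A.IsHermitian) (k : ℕ)
    (h1 : 1 ≤ k) (h2 : k ≤ n) :
    lamb hA k = ((sortedEig hA ⟨k - 1, by omega⟩ : ℝ) : EReal) := by
  rw [lamb, dif_pos ⟨h1, h2⟩]; rfl

noncomputable def wvec (α : Fin n → Fin n → ℝ) (u₀ v₀ : Fin n) : Fin n → ℂ :=
  fun i => if i = u₀ then 1 else if i = v₀ then -Complex.exp ((α v₀ u₀ : ℂ) * Complex.I) else 0

theorem nbr_delete (G : SimpleGraph (Fin n)) (u₀ v₀ : Fin n) :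
    ((G.deleteEdges {s(u₀,v₀)}).neighborSet u₀) = G.neighborSet u₀ \ {v₀} := by
  ext x
  simp only [SimpleGraph.mem_neighborSet, SimpleGraph.deleteEdges_adj, Set.mem_diff,
    Set.mem_singleton_iff, Sym2.congr_right]

theorem nbr_delete_card (G : SimpleGraph (Fin n)) {u₀ v₀ : Fin n} (h : G.Adj u₀ v₀) :
    (G.neighborSet u₀).ncard = ((G.deleteEdges {s(u₀,v₀)}).neighborSet u₀).ncard + 1 := by
  rw [nbr_delete G u₀ v₀]
  exact (Set.ncard_diff_singleton_add_one h (Set.toFinite _)).symm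

theorem nbr_delete_other (G : SimpleGraph (Fin n)) {u₀ v₀ i : Fin n} (hi : i ≠ u₀) (hi' : i ≠ v₀) :
    ((G.deleteEdges {s(u₀,v₀)}).neighborSet i) = G.neighborSet i := by
  ext x
  simp only [SimpleGraph.mem_neighborSet, SimpleGraph.deleteEdges_adj, Set.mem_singleton_iff,
    Sym2.eq_iff]
  constructor
  · exact fun h => h.1
  · intro h
    refine ⟨h, ?_⟩
    rintro (⟨rfl, rfl⟩ | ⟨rfl, rfl⟩) <;> simp_all

theorem exp_mul_conj_exp (θ : ℝ) :
    Complex.exp ((θ : ℂ) * Complex.I) * (starRingEnd ℂ) (Complex.exp ((θ : ℂ) * Complex.I)) = 1 := by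
  rw [← Complex.exp_conj, ← Complex.exp_add]
  simp [Complex.conj_ofReal, Complex.conj_I, mul_comm]

theorem magLap_decomp (G : SimpleGraph (Fin n)) (α : Fin n → Fin n → ℝ)
    (hα : ∀ u v, α v u = -α u v) {u₀ v₀ : Fin n} (h : G.Adj u₀ v₀) :
    magLap G α = magLap (G.deleteEdges {s(u₀,v₀)}) α +
      Matrix.of (fun i j => wvec α u₀ v₀ i * (starRingEnd ℂ) (wvec α u₀ v₀ j)) := by
  have huv : u₀ ≠ v₀ := h.ne
  ext i j
  simp only [magLap, Matrix.of_apply, Matrix.add_apply, wvec]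
  by_cases hij : i = j
  · rw [if_pos hij, if_pos hij, ← hij]
    by_cases hiu : i = u₀
    · rw [hiu, nbr_delete_card G h, if_pos rfl]
      push_cast
      simp
    · by_cases hiv : i = v₀
      · have h' : G.Adj v₀ u₀ := h.symm
        have hswap : s(u₀, v₀) = s(v₀, u₀) := Sym2.eq_swap
        rw [hiv, hswap, nbr_delete_card G h', if_neg (Ne.symm huv), if_pos rfl]
        push_cast
        rw [map_neg, neg_mul_neg, exp_mul_conj_exp]
      · rw [nbr_delete_other G hiu hiv, if_neg hiu, if_neg hiv]
        simp
  · rw [if_neg hij, if_neg hij]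
    by_cases hcu : i = u₀
    · by_cases hjv : j = v₀
      · -- (u₀, v₀) entry
        have hGadj : G.Adj i j := by rw [hcu, hjv]; exact h
        have hG' : ¬ (G.deleteEdges {s(u₀,v₀)}).Adj i j := by
          rw [hcu, hjv]
          simp [SimpleGraph.deleteEdges_adj]
        have hju : ¬ j = u₀ := by rw [hjv]; exact Ne.symm huv
        rw [if_pos hGadj, if_neg hG', if_pos hcu, if_neg hju, if_pos hjv, zero_add,
          map_neg, ← Complex.exp_conj]
        have hc : (starRingEnd ℂ) ((α v₀ u₀ : ℂ) * Complex.I) = ((α i j : ℝ) : ℂ) * Complex.I := by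
          rw [_root_.map_mul, Complex.conj_ofReal, Complex.conj_I, hcu, hjv,
            show α v₀ u₀ = -α u₀ v₀ from hα u₀ v₀]
          push_cast
          ring
        rw [hc]
        simp
      · -- i = u₀, j ∉ {u₀, v₀}: w j = 0
        have hju : ¬ j = u₀ := by rw [hcu] at hij; exact fun hh => hij hh.symm
        have hne : ¬ (s(i, j) = s(u₀, v₀)) := by
          intro hEq
          rw [Sym2.eq_iff] at hEq
          rcases hEq with ⟨_, h2⟩ | ⟨_, h2⟩
          · exact hjv h2
          · exact hju h2
        have hadj_iff : (G.deleteEdges {s(u₀,v₀)}).Adj i j ↔ G.Adj i j := by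
          simp [SimpleGraph.deleteEdges_adj, hne]
        rw [if_neg hju, if_neg hjv, map_zero, mul_zero, add_zero]
        by_cases hGa : G.Adj i j
        · rw [if_pos hGa, if_pos (hadj_iff.mpr hGa)]
        · rw [if_neg hGa, if_neg (fun hh => hGa (hadj_iff.mp hh))]
    · by_cases hcv : i = v₀
      · by_cases hju : j = u₀
        · -- (v₀, u₀) entry
          have hGadj : G.Adj i j := by rw [hcv, hju]; exact h.symm
          have hG' : ¬ (G.deleteEdges {s(u₀,v₀)}).Adj i j := by
            rw [hcv, hju]
            simp [SimpleGraph.deleteEdges_adj, Sym2.eq_swap]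
          rw [if_pos hGadj, if_neg hG', if_neg hcu, if_pos hcv, if_pos hju, zero_add,
            _root_.map_one, mul_one, hcv, hju]
        · -- i = v₀, j ∉ {u₀, v₀} (note j = v₀ impossible since i = v₀, i ≠ j)
          have hjv : ¬ j = v₀ := by rw [hcv] at hij; exact fun hh => hij hh.symm
          have hne : ¬ (s(i, j) = s(u₀, v₀)) := by
            intro hEq
            rw [Sym2.eq_iff] at hEq
            rcases hEq with ⟨h1, _⟩ | ⟨_, h2⟩
            · exact hcu h1
            · exact hju h2
          have hadj_iff : (G.deleteEdges {s(u₀,v₀)}).Adj i j ↔ G.Adj i j := by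
            simp [SimpleGraph.deleteEdges_adj, hne]
          rw [if_neg hju, if_neg hjv, map_zero, mul_zero, add_zero]
          by_cases hGa : G.Adj i j
          · rw [if_pos hGa, if_pos (hadj_iff.mpr hGa)]
          · rw [if_neg hGa, if_neg (fun hh => hGa (hadj_iff.mp hh))]
      · -- i ∉ {u₀, v₀}: w i = 0
        have hne : ¬ (s(i, j) = s(u₀, v₀)) := by
          intro hEq
          rw [Sym2.eq_iff] at hEq
          rcases hEq with ⟨h1, _⟩ | ⟨h1, _⟩
          · exact hcu h1
          · exact hcv h1
        have hadj_iff : (G.deleteEdges {s(u₀,v₀)}).Adj i j ↔ G.Adj i j := by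
          simp [SimpleGraph.deleteEdges_adj, hne]
        rw [if_neg hcu, if_neg hcv, zero_mul, add_zero]
        by_cases hGa : G.Adj i j
        · rw [if_pos hGa, if_pos (hadj_iff.mpr hGa)]
        · rw [if_neg hGa, if_neg (fun hh => hGa (hadj_iff.mp hh))]

noncomputable def phiMap (w : Fin n → ℂ) : EuclideanSpace ℂ (Fin n) →ₗ[ℂ] ℂ where
  toFun x := ∑ j, (starRingEnd ℂ) (w j) * x j
  map_add' x y := by
    simp only [PiLp.add_apply, mul_add, Finset.sum_add_distrib]
  map_smul' c x := by
    simp only [PiLp.smul_apply, smul_eq_mul, RingHom.id_apply, Finset.mul_sum]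
    exact Finset.sum_congr rfl fun j _ => by ring

theorem quad_outer (w : Fin n → ℂ) (x : EuclideanSpace ℂ (Fin n)) :
    (inner ℂ x (Matrix.toEuclideanLin
        (Matrix.of fun i j => w i * (starRingEnd ℂ) (w j)) x) : ℂ).re
      = ‖phiMap w x‖ ^ 2 := by
  have hx : ∀ i, (Matrix.toEuclideanLin
      (Matrix.of fun i j => w i * (starRingEnd ℂ) (w j)) x) i
      = w i * phiMap w x := by
    intro i
    rw [Matrix.toEuclideanLin_apply]
    show ((Matrix.of fun i j => w i * (starRingEnd ℂ) (w j)) *ᵥ (WithLp.equiv 2 _ x)) i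
      = w i * phiMap w x
    simp only [Matrix.mulVec, dotProduct, Matrix.of_apply, phiMap,
      WithLp.equiv_apply, LinearMap.coe_mk, AddHom.coe_mk, Finset.mul_sum]
    exact Finset.sum_congr rfl fun j _ => by ring
  rw [PiLp.inner_apply]
  have h2 : ∀ i : Fin n, (inner ℂ (x i) ((Matrix.toEuclideanLin
      (Matrix.of fun i j => w i * (starRingEnd ℂ) (w j)) x) i) : ℂ)
      = ((starRingEnd ℂ) (x i) * w i) * phiMap w x := by
    intro i
    rw [RCLike.inner_apply, hx i]
    ring
  rw [Finset.sum_congr rfl fun i _ => h2 i, ← Finset.sum_mul]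
  have h3 : (∑ i, (starRingEnd ℂ) (x i) * w i) = (starRingEnd ℂ) (phiMap w x) := by
    simp only [phiMap, LinearMap.coe_mk, AddHom.coe_mk, map_sum, _root_.map_mul,
      RingHomCompTriple.comp_apply, RingHom.id_apply]
    exact Finset.sum_congr rfl fun j _ => mul_comm _ _
  rw [h3, Complex.conj_mul']
  norm_cast


theorem lamb_interlace {A D M : Matrix (Fin n) (Fin n) ℂ} (hA : A.IsHermitian)
    (hM : M.IsHermitian) (hMeq : M = A + D)
    (φ : EuclideanSpace ℂ (Fin n) →ₗ[ℂ] ℂ)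
    (hD : ∀ x, (inner ℂ x (Matrix.toEuclideanLin D x) : ℂ).re = ‖φ x‖ ^ 2) :
    (∀ k : ℕ, 1 ≤ k → k ≤ n → lamb hA k ≤ lamb hM k) ∧
    (∀ k : ℕ, 1 ≤ k → k ≤ n - 1 → lamb hM k ≤ lamb hA (k + 1)) := by
  have hTsum : Matrix.toEuclideanLin A + Matrix.toEuclideanLin D = Matrix.toEuclideanLin M := by
    rw [hMeq, map_add]
  have hTA := Matrix.isHermitian_iff_isSymmetric.mp hA
  have hTM : (Matrix.toEuclideanLin A + Matrix.toEuclideanLin D).IsSymmetric := by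
    rw [hTsum]; exact Matrix.isHermitian_iff_isSymmetric.mp hM
  have hMe : ∀ i, (Matrix.toEuclideanLin A + Matrix.toEuclideanLin D) (sortedEigBasis hM i)
      = (sortedEig hM i : ℂ) • sortedEigBasis hM i := by
    intro i; rw [hTsum]; exact sortedEig_apply hM i
  have hD0 : ∀ x, 0 ≤ (inner ℂ x (Matrix.toEuclideanLin D x) : ℂ).re := by
    intro x; rw [hD x]; positivity
  constructor
  · intro k h1 h2
    rw [lamb_eq hA k h1 h2, lamb_eq hM k h1 h2, EReal.coe_le_coe_iff]
    exact interlace_le _ _ hTA hTM (sortedEigBasis hA) (sortedEigBasis hM)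
      (sortedEig hA) (sortedEig hM) (sortedEig_monotone hA) (sortedEig_monotone hM)
      (sortedEig_apply hA) hMe hD0 ⟨k - 1, by omega⟩
  · intro k h1 h2
    have hn : 2 ≤ n := by omega
    rw [lamb_eq hM k h1 (by omega), lamb_eq hA (k + 1) (by omega) (by omega),
      EReal.coe_le_coe_iff]
    have hlt : (k - 1) + 1 < n := by omega
    have hmain := interlace_ge _ _ hTA hTM (sortedEigBasis hA) (sortedEigBasis hM)
      (sortedEig hA) (sortedEig hM) (sortedEig_monotone hA) (sortedEig_monotone hM)
      (sortedEig_apply hA) hMe φ hD ⟨k - 1, by omega⟩ hlt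
    have hfin : (⟨(k - 1) + 1, hlt⟩ : Fin n) = ⟨(k + 1) - 1, by omega⟩ := by
      apply Fin.ext; simp; omega
    rwa [hfin] at hmain

end Aux

/-- The matching number of a graph: the maximal number of pairwise independent edges. -/
noncomputable def matchingNumber {n : ℕ} (G : SimpleGraph (Fin n)) : ℕ :=
  sSup {k : ℕ | ∃ M : G.Subgraph, M.IsMatching ∧ M.edgeSet.ncard = k}

/-- Deleting a single edge from a magnetic graph interlaces the
eigenvalues of the discrete magnetic Laplacian. -/
theorem deleteEdge_interlacing {n : ℕ} (G : SimpleGraph (Fin n))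
    (α : Fin n → Fin n → ℝ) (hα : ∀ u v, α v u = -α u v)
    (e₀ : Sym2 (Fin n)) (he₀ : e₀ ∈ G.edgeSet) :
    (∀ k : ℕ, 1 ≤ k → k ≤ n →
      lamb (magLap_isHermitian (G.deleteEdges {e₀}) α hα) k ≤
        lamb (magLap_isHermitian G α hα) k) ∧
    (∀ k : ℕ, 1 ≤ k → k ≤ n - 1 →
      lamb (magLap_isHermitian G α hα) k ≤
        lamb (magLap_isHermitian (G.deleteEdges {e₀}) α hα) (k + 1)) := by
  induction e₀ using Sym2.ind with
  | _ u₀ v₀ =>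
    have hadj : G.Adj u₀ v₀ := (SimpleGraph.mem_edgeSet G).mp he₀
    exact lamb_interlace (magLap_isHermitian (G.deleteEdges {s(u₀, v₀)}) α hα)
      (magLap_isHermitian G α hα) (magLap_decomp G α hα hadj)
      (phiMap (wvec α u₀ v₀)) (quad_outer (wvec α u₀ v₀))
end

section
/- Let T be a tree on n vertices that has a perfect matching. Then n is even and λ_{n/2+1}(Δ^T) = 2, where Δ^T is the combinatorial Laplacian of T. -/
set_option linter.unusedSectionVars false
set_option maxHeartbeats 1000000
open Finset Matrix

section SpectralCount
set_option linter.unusedSectionVars false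
variable {ι : Type*} [Fintype ι] [DecidableEq ι]

noncomputable def spanOB (B : OrthonormalBasis ι ℂ (EuclideanSpace ℂ ι)) (S : Finset ι) :
    Submodule ℂ (EuclideanSpace ℂ ι) :=
  Submodule.span ℂ (B '' ↑S)

lemma repr_eq_zero_of_mem_spanOB (B : OrthonormalBasis ι ℂ (EuclideanSpace ℂ ι)) (S : Finset ι)
    {x} (hx : x ∈ spanOB B S) {j} (hj : j ∉ S) : B.repr x j = 0 := by
  let P : Submodule ℂ (EuclideanSpace ℂ ι) :=
  { carrier := {x | ∀ j ∉ S, B.repr x j = 0}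
    add_mem' := by
      intro a b ha hb j hj
      have : B.repr (a + b) j = B.repr a j + B.repr b j := by
        rw [map_add]; rfl
      rw [this, ha j hj, hb j hj, add_zero]
    zero_mem' := by intro j hj; rw [map_zero]; rfl
    smul_mem' := by
      intro c a ha j hj
      have : B.repr (c • a) j = c * B.repr a j := by
        rw [_root_.map_smul]; rfl
      rw [this, ha j hj, mul_zero] }
  have hP : spanOB B S ≤ P := by
    rw [spanOB, Submodule.span_le]
    rintro y ⟨i, hiS, rfl⟩
    intro j hj
    rw [B.repr_self i]
    have : j ≠ i := by rintro rfl; exact hj hiS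
    simp [EuclideanSpace.single_apply, this]
  exact hP hx j hj

lemma finrank_spanOB (B : OrthonormalBasis ι ℂ (EuclideanSpace ℂ ι)) (S : Finset ι) :
    Module.finrank ℂ (spanOB B S) = S.card := by
  have hli : LinearIndependent ℂ (fun i : {x // x ∈ S} => B i) :=
    B.orthonormal.linearIndependent.comp _ Subtype.coe_injective
  have himg : Set.range (fun i : {x // x ∈ S} => B i) = B '' ↑S := by
    rw [Set.image_eq_range]; rfl
  rw [spanOB, ← himg, finrank_span_eq_card hli, Fintype.card_coe]

lemma core_dim_bound (B : OrthonormalBasis ι ℂ (EuclideanSpace ℂ ι))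
    (W : Submodule ℂ (EuclideanSpace ℂ ι)) (S : Finset ι)
    (h : ∀ x, x ∈ W → x ∈ spanOB B S → x = 0) :
    Module.finrank ℂ W + S.card ≤ Fintype.card ι := by
  have hinf : W ⊓ spanOB B S = ⊥ := by
    rw [Submodule.eq_bot_iff]
    rintro x ⟨hx1, hx2⟩
    exact h x hx1 hx2
  have hsum := Submodule.finrank_sup_add_finrank_inf_eq W (spanOB B S)
  rw [hinf] at hsum
  have h2 : Module.finrank ℂ (W ⊔ spanOB B S : Submodule ℂ (EuclideanSpace ℂ ι)) ≤
      Fintype.card ι := by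
    have := Submodule.finrank_le (W ⊔ spanOB B S : Submodule ℂ (EuclideanSpace ℂ ι))
    rwa [finrank_euclideanSpace] at this
  rw [finrank_bot, add_zero] at hsum
  rw [← finrank_spanOB B S, ← hsum]
  exact h2

end SpectralCount

section EigenLemmas
variable {ι : Type*} [Fintype ι] [DecidableEq ι]

local notation "⟪" x ", " y "⟫" => @inner ℂ _ _ x y

lemma parseval_dot (B : OrthonormalBasis ι ℂ (EuclideanSpace ℂ ι)) (x y : EuclideanSpace ℂ ι) :
    ⟪x, y⟫ = ∑ i, (starRingEnd ℂ) (B.repr x i) * (B.repr y i) := by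
  rw [← B.repr.inner_map_map x y, PiLp.inner_apply]
  refine Finset.sum_congr rfl (fun i _ => ?_)
  rw [RCLike.inner_apply, mul_comm]

variable {A : Matrix ι ι ℂ} (hA : A.IsHermitian)

lemma repr_TA (x : EuclideanSpace ℂ ι) (i : ι) :
    hA.eigenvectorBasis.repr (Matrix.toEuclideanLin A x) i =
      (hA.eigenvalues i : ℂ) * hA.eigenvectorBasis.repr x i := by
  set B := hA.eigenvectorBasis with hB
  rw [B.repr_apply_apply, B.repr_apply_apply]
  rw [EuclideanSpace.inner_eq_star_dotProduct, EuclideanSpace.inner_eq_star_dotProduct]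
  rw [Matrix.toEuclideanLin_apply, WithLp.ofLp_toLp]
  rw [dotProduct_comm, Matrix.dotProduct_mulVec, dotProduct_comm x.ofLp]
  have hstar : star (B i).ofLp ᵥ* A
      = (hA.eigenvalues i : ℂ) • star (B i).ofLp := by
    have h1 : star (B i).ofLp ᵥ* A
        = star (Aᴴ *ᵥ (B i).ofLp) := by
      rw [Matrix.star_mulVec, Matrix.conjTranspose_conjTranspose]
    rw [h1, hA.eq]
    have h2 := hA.mulVec_eigenvectorBasis i
    rw [← hB] at h2
    rw [h2]
    ext j
    simp [Complex.real_smul, Pi.smul_apply, Complex.conj_ofReal]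
  rw [hstar, smul_dotProduct]
  simp [smul_eq_mul]

end EigenLemmas

section EigenLemmas2
variable {ι : Type*} [Fintype ι] [DecidableEq ι] {A : Matrix ι ι ℂ} (hA : A.IsHermitian)

local notation "⟪" x ", " y "⟫" => @inner ℂ _ _ x y

lemma E1 (S : Finset ι) {x : EuclideanSpace ℂ ι} (hx : x ∈ spanOB hA.eigenvectorBasis S) :
    (⟪x, x⟫).re = ∑ i ∈ S, Complex.normSq (hA.eigenvectorBasis.repr x i) := by
  rw [parseval_dot hA.eigenvectorBasis x x]
  rw [Complex.re_sum]
  rw [← Finset.sum_subset (Finset.subset_univ S)]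
  · apply Finset.sum_congr rfl
    intro i _
    rw [← Complex.normSq_eq_conj_mul_self, Complex.ofReal_re]
  · intro i _ hi
    rw [repr_eq_zero_of_mem_spanOB _ _ hx hi]
    simp

lemma E2 (S : Finset ι) {x : EuclideanSpace ℂ ι} (hx : x ∈ spanOB hA.eigenvectorBasis S) :
    (⟪x, Matrix.toEuclideanLin A x⟫).re
      = ∑ i ∈ S, hA.eigenvalues i * Complex.normSq (hA.eigenvectorBasis.repr x i) := by
  rw [parseval_dot hA.eigenvectorBasis]
  rw [Complex.re_sum]
  rw [← Finset.sum_subset (Finset.subset_univ S)]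
  · apply Finset.sum_congr rfl
    intro i _
    rw [repr_TA hA x i]
    have heq : (starRingEnd ℂ) (hA.eigenvectorBasis.repr x i) *
        ((hA.eigenvalues i : ℂ) * hA.eigenvectorBasis.repr x i)
        = ((hA.eigenvalues i : ℝ) : ℂ) * ((Complex.normSq (hA.eigenvectorBasis.repr x i) : ℝ) : ℂ) := by
      rw [Complex.normSq_eq_conj_mul_self]; ring
    rw [heq, ← Complex.ofReal_mul, Complex.ofReal_re]
  · intro i _ hi
    rw [repr_eq_zero_of_mem_spanOB _ _ hx hi]
    simp

lemma E3 (S : Finset ι) {x : EuclideanSpace ℂ ι} (hx : x ∈ spanOB hA.eigenvectorBasis S) :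
    (⟪x, Matrix.toEuclideanLin A (Matrix.toEuclideanLin A x)⟫).re
      = ∑ i ∈ S, hA.eigenvalues i ^ 2 * Complex.normSq (hA.eigenvectorBasis.repr x i) := by
  rw [parseval_dot hA.eigenvectorBasis]
  rw [Complex.re_sum]
  rw [← Finset.sum_subset (Finset.subset_univ S)]
  · apply Finset.sum_congr rfl
    intro i _
    rw [repr_TA hA _ i, repr_TA hA x i]
    have heq : (starRingEnd ℂ) (hA.eigenvectorBasis.repr x i) *
        ((hA.eigenvalues i : ℂ) * ((hA.eigenvalues i : ℂ) * hA.eigenvectorBasis.repr x i))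
        = (((hA.eigenvalues i ^ 2 : ℝ)) : ℂ) * ((Complex.normSq (hA.eigenvectorBasis.repr x i) : ℝ) : ℂ) := by
      rw [Complex.normSq_eq_conj_mul_self]; push_cast; ring
    rw [heq, ← Complex.ofReal_mul, Complex.ofReal_re]
  · intro i _ hi
    rw [repr_eq_zero_of_mem_spanOB _ _ hx hi]
    simp

lemma E4 {x : EuclideanSpace ℂ ι} (S : Finset ι) (hx : x ∈ spanOB hA.eigenvectorBasis S)
    (hx0 : x ≠ 0) : ∃ i ∈ S, hA.eigenvectorBasis.repr x i ≠ 0 := by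
  by_contra hc
  push_neg at hc
  apply hx0
  have : hA.eigenvectorBasis.repr x = 0 := by
    ext i
    by_cases hi : i ∈ S
    · exact hc i hi
    · exact repr_eq_zero_of_mem_spanOB _ _ hx hi
  have := congrArg hA.eigenvectorBasis.repr.symm this
  simpa using this

lemma count_lt (W : Submodule ℂ (EuclideanSpace ℂ ι)) (t : ℝ)
    (hW : ∀ x ∈ W, t * (⟪x, x⟫).re ≤ (⟪x, Matrix.toEuclideanLin A x⟫).re) :
    Module.finrank ℂ W + (Finset.univ.filter fun i => hA.eigenvalues i < t).card
      ≤ Fintype.card ι := by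
  set S := Finset.univ.filter fun i => hA.eigenvalues i < t with hS
  apply core_dim_bound hA.eigenvectorBasis W S
  intro x hxW hxS
  by_contra hx0
  have h1 := E1 hA S hxS
  have h2 := E2 hA S hxS
  obtain ⟨i0, hi0S, hi0⟩ := E4 hA S hxS hx0
  have hlt : ∑ i ∈ S, hA.eigenvalues i * Complex.normSq (hA.eigenvectorBasis.repr x i)
      < ∑ i ∈ S, t * Complex.normSq (hA.eigenvectorBasis.repr x i) := by
    apply Finset.sum_lt_sum
    · intro i hi
      have : hA.eigenvalues i < t := (Finset.mem_filter.mp hi).2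
      exact mul_le_mul_of_nonneg_right this.le (Complex.normSq_nonneg _)
    · refine ⟨i0, hi0S, ?_⟩
      have : hA.eigenvalues i0 < t := (Finset.mem_filter.mp hi0S).2
      exact mul_lt_mul_of_pos_right this (Complex.normSq_pos.mpr hi0)
  rw [← Finset.mul_sum] at hlt
  have := hW x hxW
  rw [h1, h2] at this
  linarith

lemma count_gt (W : Submodule ℂ (EuclideanSpace ℂ ι)) (t : ℝ)
    (hW : ∀ x ∈ W, (⟪x, Matrix.toEuclideanLin A x⟫).re ≤ t * (⟪x, x⟫).re) :
    Module.finrank ℂ W + (Finset.univ.filter fun i => t < hA.eigenvalues i).card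
      ≤ Fintype.card ι := by
  set S := Finset.univ.filter fun i => t < hA.eigenvalues i with hS
  apply core_dim_bound hA.eigenvectorBasis W S
  intro x hxW hxS
  by_contra hx0
  have h1 := E1 hA S hxS
  have h2 := E2 hA S hxS
  obtain ⟨i0, hi0S, hi0⟩ := E4 hA S hxS hx0
  have hlt : ∑ i ∈ S, t * Complex.normSq (hA.eigenvectorBasis.repr x i)
      < ∑ i ∈ S, hA.eigenvalues i * Complex.normSq (hA.eigenvectorBasis.repr x i) := by
    apply Finset.sum_lt_sum
    · intro i hi
      have : t < hA.eigenvalues i := (Finset.mem_filter.mp hi).2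
      exact mul_le_mul_of_nonneg_right this.le (Complex.normSq_nonneg _)
    · refine ⟨i0, hi0S, ?_⟩
      have : t < hA.eigenvalues i0 := (Finset.mem_filter.mp hi0S).2
      exact mul_lt_mul_of_pos_right this (Complex.normSq_pos.mpr hi0)
  rw [← Finset.mul_sum] at hlt
  have := hW x hxW
  rw [h1, h2] at this
  linarith

lemma count_le (W : Submodule ℂ (EuclideanSpace ℂ ι)) (t : ℝ)
    (hW : ∀ x ∈ W, x ≠ 0 → t * (⟪x, x⟫).re < (⟪x, Matrix.toEuclideanLin A x⟫).re) :
    Module.finrank ℂ W + (Finset.univ.filter fun i => hA.eigenvalues i ≤ t).card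
      ≤ Fintype.card ι := by
  set S := Finset.univ.filter fun i => hA.eigenvalues i ≤ t with hS
  apply core_dim_bound hA.eigenvectorBasis W S
  intro x hxW hxS
  by_contra hx0
  have h1 := E1 hA S hxS
  have h2 := E2 hA S hxS
  have hle : ∑ i ∈ S, hA.eigenvalues i * Complex.normSq (hA.eigenvectorBasis.repr x i)
      ≤ ∑ i ∈ S, t * Complex.normSq (hA.eigenvectorBasis.repr x i) := by
    apply Finset.sum_le_sum
    intro i hi
    have : hA.eigenvalues i ≤ t := (Finset.mem_filter.mp hi).2
    exact mul_le_mul_of_nonneg_right this (Complex.normSq_nonneg _)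
  rw [← Finset.mul_sum] at hle
  have := hW x hxW hx0
  rw [h1, h2] at this
  linarith

include hA in
lemma herm_move (x z : EuclideanSpace ℂ ι) :
    ⟪Matrix.toEuclideanLin A x, z⟫ = ⟪x, Matrix.toEuclideanLin A z⟫ := by
  have h : LinearMap.adjoint (Matrix.toEuclideanLin A) = Matrix.toEuclideanLin A := by
    rw [← Matrix.toEuclideanLin_conjTranspose_eq_adjoint, hA.eq]
  conv_lhs => rw [← h]
  rw [LinearMap.adjoint_inner_left]

lemma E3' (S : Finset ι) {x : EuclideanSpace ℂ ι} (hx : x ∈ spanOB hA.eigenvectorBasis S) :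
    (⟪Matrix.toEuclideanLin A x, Matrix.toEuclideanLin A x⟫).re
      = ∑ i ∈ S, hA.eigenvalues i ^ 2 * Complex.normSq (hA.eigenvectorBasis.repr x i) := by
  rw [herm_move hA]
  exact E3 hA S hx

end EigenLemmas2


noncomputable section GraphPart

def magLap0 {n : ℕ} (G : SimpleGraph (Fin n)) : Matrix (Fin n) (Fin n) ℂ :=
  magLap G (fun _ _ => 0)

variable {n : ℕ}

def smin (e : Sym2 (Fin n)) : Fin n :=
  Sym2.lift ⟨fun a b => min a b, fun a b => min_comm a b⟩ e

def smax (e : Sym2 (Fin n)) : Fin n :=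
  Sym2.lift ⟨fun a b => max a b, fun a b => max_comm a b⟩ e

lemma sym2_eq_mk (e : Sym2 (Fin n)) : e = s(smin e, smax e) := by
  induction e using Sym2.ind with
  | _ x y =>
    rw [smin, smax, Sym2.lift_mk, Sym2.lift_mk]
    rcases le_total x y with h | h
    · simp [min_eq_left h, max_eq_right h]
    · simp only [min_eq_right h, max_eq_left h]
      exact Sym2.eq_swap.symm

lemma mem_iff_smin_smax {v : Fin n} {e : Sym2 (Fin n)} : v ∈ e ↔ v = smin e ∨ v = smax e := by
  conv_lhs => rw [sym2_eq_mk e]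
  exact Sym2.mem_iff

lemma smin_ne_smax {e : Sym2 (Fin n)} (h : ¬ e.IsDiag) : smin e ≠ smax e := by
  intro hc
  apply h
  rw [sym2_eq_mk e, hc]
  exact Sym2.mk_isDiag_iff.mpr rfl

variable (T : SimpleGraph (Fin n)) [Fintype T.edgeSet] [DecidableRel T.Adj]

def Bmat : Matrix (Fin n) T.edgeSet ℂ :=
  Matrix.of fun v e =>
    if v = smin e.val then 1 else if v = smax e.val then -1 else 0

lemma Bmat_eq_zero {v : Fin n} {e : T.edgeSet} (h : v ∉ e.val) : Bmat T v e = 0 := by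
  rw [Bmat, Matrix.of_apply, if_neg, if_neg]
  · intro hc; exact h (mem_iff_smin_smax.mpr (Or.inr hc))
  · intro hc; exact h (mem_iff_smin_smax.mpr (Or.inl hc))

lemma Bmat_sq {v : Fin n} (e : T.edgeSet) :
    Bmat T v e * (starRingEnd ℂ) (Bmat T v e) = if v ∈ e.val then 1 else 0 := by
  by_cases h : v ∈ e.val
  · rw [if_pos h, Bmat, Matrix.of_apply]
    rcases mem_iff_smin_smax.mp h with h1 | h1
    · rw [if_pos h1]; simp
    · by_cases h2 : v = smin e.val
      · rw [if_pos h2]; simp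
      · rw [if_neg h2, if_pos h1]; simp
  · rw [if_neg h, Bmat_eq_zero T h]; simp

/-- The key factorization: the zero-potential magnetic Laplacian is `B * Bᴴ`. -/
lemma magLap0_eq : magLap0 T = Bmat T * (Bmat T)ᴴ := by
  ext u v
  rw [Matrix.mul_apply]
  by_cases huv : u = v
  · subst huv
    rw [magLap0, magLap, Matrix.of_apply, if_pos rfl]
    have h1 : ∀ e : T.edgeSet, Bmat T u e * (Bmat T)ᴴ e u
        = if u ∈ e.val then 1 else 0 := by
      intro e
      rw [Matrix.conjTranspose_apply]
      exact Bmat_sq T e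
    rw [Finset.sum_congr rfl (fun e _ => h1 e)]
    rw [Finset.sum_boole]
    have h2 : (Finset.univ.filter fun e : T.edgeSet => u ∈ e.val).card
        = (T.neighborSet u).ncard := by
      have hdeg : (T.neighborSet u).ncard = T.degree u := by
        rw [Set.ncard_eq_toFinset_card']
        rw [SimpleGraph.degree, SimpleGraph.neighborFinset_def]
      rw [hdeg, ← SimpleGraph.card_incidenceFinset_eq_degree,
        SimpleGraph.incidenceFinset_eq_filter]
      apply Finset.card_bij (fun e _ => e.val)
      · intro e he
        simp only [Finset.mem_filter] at he ⊢
        exact ⟨SimpleGraph.mem_edgeFinset.mpr e.prop, he.2⟩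
      · intro e1 h1 e2 h2 h12
        exact Subtype.ext h12
      · intro e he
        simp only [Finset.mem_filter] at he
        exact ⟨⟨e, SimpleGraph.mem_edgeFinset.mp he.1⟩, by simp [he.2], rfl⟩
    rw [h2]
  · rw [magLap0, magLap, Matrix.of_apply, if_neg huv]
    have hterm : ∀ e : T.edgeSet, e.val ≠ s(u, v) → Bmat T u e * (Bmat T)ᴴ e v = 0 := by
      intro e hne
      rw [Matrix.conjTranspose_apply]
      by_cases hu : u ∈ e.val
      · by_cases hv : v ∈ e.val
        · exact absurd ((Sym2.mem_and_mem_iff huv).mp ⟨hu, hv⟩) hne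
        · rw [Bmat_eq_zero T hv]; simp
      · rw [Bmat_eq_zero T hu]; simp
    by_cases hadj : T.Adj u v
    · rw [if_pos hadj]
      have he0 : s(u, v) ∈ T.edgeSet := T.mem_edgeSet.mpr hadj
      have hsum := Finset.sum_eq_single (f := fun e : T.edgeSet => Bmat T u e * (Bmat T)ᴴ e v)
        (⟨s(u, v), he0⟩ : T.edgeSet)
        (fun e _ hne => hterm e (fun hc => hne (Subtype.ext hc)))
        (fun hmem => absurd (Finset.mem_univ _) hmem)
      rw [hsum]
      show _ = Bmat T u ⟨s(u, v), he0⟩ * (Bmat T)ᴴ (⟨s(u, v), he0⟩ : T.edgeSet) v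
      rw [Matrix.conjTranspose_apply]
      have hmin : smin (s(u, v)) = min u v := rfl
      have hmax : smax (s(u, v)) = max u v := rfl
      have hexp : -Complex.exp ((0 : ℝ) * Complex.I) = -1 := by simp
      rw [hexp]
      rcases huv' : lt_or_gt_of_ne huv with h | h
      · have h1 : min u v = u := min_eq_left h.le
        have h2 : max u v = v := max_eq_right h.le
        simp only [Bmat, Matrix.of_apply]
        simp only [hmin, hmax, h1, h2]
        simp [huv, Ne.symm huv]
      · have h1 : min u v = v := min_eq_right h.le
        have h2 : max u v = u := max_eq_left h.le
        simp only [Bmat, Matrix.of_apply]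
        simp only [hmin, hmax, h1, h2]
        simp [huv, Ne.symm huv]
    · rw [if_neg hadj]
      symm
      apply Finset.sum_eq_zero
      intro e _
      apply hterm
      intro hc
      exact hadj (T.mem_edgeSet.mp (hc ▸ e.prop))

lemma card_edgeSet_tree (hT : T.IsTree) : Fintype.card T.edgeSet = n - 1 := by
  have h1 : T.edgeFinset.card + 1 = Fintype.card (Fin n) := hT.card_edgeFinset
  rw [Fintype.card_fin] at h1
  have h2 : T.edgeFinset.card = Fintype.card T.edgeSet := by
    rw [SimpleGraph.edgeFinset, Set.toFinset_card]
  omega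

section SM
variable (SM : Finset T.edgeSet)
  (hcov : ∀ v : Fin n, ∃ e ∈ SM, v ∈ (e : T.edgeSet).val)
  (hdisj : ∀ e ∈ SM, ∀ f ∈ SM, e ≠ f →
    ∀ w : Fin n, ¬(w ∈ (e : T.edgeSet).val ∧ w ∈ (f : T.edgeSet).val))

include hcov hdisj in
lemma card_SM : n = 2 * SM.card := by
  have hpair : ∀ e : T.edgeSet, ({smin e.val, smax e.val} : Finset (Fin n)).card = 2 := by
    intro e
    rw [Finset.card_insert_of_notMem (by
      simp only [Finset.mem_singleton]
      exact smin_ne_smax (T.not_isDiag_of_mem_edgeSet e.prop)), Finset.card_singleton]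
  have huniv : (Finset.univ : Finset (Fin n))
      = SM.biUnion (fun e => {smin (e : T.edgeSet).val, smax (e : T.edgeSet).val}) := by
    apply Finset.ext
    intro v
    simp only [Finset.mem_univ, true_iff, Finset.mem_biUnion]
    obtain ⟨e, heSM, hve⟩ := hcov v
    refine ⟨e, heSM, ?_⟩
    rcases mem_iff_smin_smax.mp hve with h | h <;> simp [h]
  have hd : ∀ e ∈ SM, ∀ f ∈ SM, e ≠ f → Disjoint
      ({smin (e : T.edgeSet).val, smax (e : T.edgeSet).val} : Finset (Fin n))
      {smin (f : T.edgeSet).val, smax (f : T.edgeSet).val} := by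
    intro e he f hf hef
    rw [Finset.disjoint_left]
    intro w hwe hwf
    apply hdisj e he f hf hef w
    constructor
    · apply mem_iff_smin_smax.mpr
      simpa using hwe
    · apply mem_iff_smin_smax.mpr
      simpa using hwf
  have := Finset.card_biUnion hd
  rw [← huniv] at this
  rw [Finset.sum_congr rfl (fun e _ => hpair e)] at this
  simp only [Finset.card_univ, Fintype.card_fin, Finset.sum_const, smul_eq_mul] at this
  omega

lemma Amat_diag (e : T.edgeSet) : ((Bmat T)ᴴ * Bmat T) e e = 2 := by
  rw [Matrix.mul_apply]
  have h1 : ∀ v : Fin n, (Bmat T)ᴴ e v * Bmat T v e = if v ∈ (e : T.edgeSet).val then 1 else 0 := by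
    intro v
    rw [Matrix.conjTranspose_apply, mul_comm]
    exact Bmat_sq T e
  rw [Finset.sum_congr rfl (fun v _ => h1 v), Finset.sum_boole]
  have h2 : Finset.univ.filter (fun v : Fin n => v ∈ (e : T.edgeSet).val)
      = {smin (e : T.edgeSet).val, smax (e : T.edgeSet).val} := by
    apply Finset.ext
    intro v
    simp only [Finset.mem_filter, Finset.mem_univ, true_and, Finset.mem_insert,
      Finset.mem_singleton]
    exact mem_iff_smin_smax
  rw [h2, Finset.card_insert_of_notMem (by
    simp only [Finset.mem_singleton]
    exact smin_ne_smax (T.not_isDiag_of_mem_edgeSet e.prop)), Finset.card_singleton]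
  norm_num

lemma Amat_off (e f : T.edgeSet)
    (h : ∀ w : Fin n, ¬(w ∈ (e : T.edgeSet).val ∧ w ∈ (f : T.edgeSet).val)) :
    ((Bmat T)ᴴ * Bmat T) e f = 0 := by
  rw [Matrix.mul_apply]
  apply Finset.sum_eq_zero
  intro v _
  rw [Matrix.conjTranspose_apply]
  by_cases hv : v ∈ (e : T.edgeSet).val
  · rw [Bmat_eq_zero T (fun hc => h v ⟨hv, hc⟩)]
    simp
  · rw [Bmat_eq_zero T hv]
    simp

end SM
end GraphPart


section Forms
variable {ι : Type*} [Fintype ι] [DecidableEq ι]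

local notation "⟪" x ", " y "⟫" => @inner ℂ _ _ x y

lemma reInnerSelf (y : EuclideanSpace ℂ ι) :
    (⟪y, y⟫).re = ∑ i, Complex.normSq (y i) := by
  rw [PiLp.inner_apply, Complex.re_sum]
  apply Finset.sum_congr rfl
  intro i _
  rw [RCLike.inner_apply, mul_comm, ← Complex.normSq_eq_conj_mul_self, Complex.ofReal_re]

lemma innerSelf_zero {y : EuclideanSpace ℂ ι} (h : (⟪y, y⟫).re = 0) : y = 0 := by
  rw [reInnerSelf] at h
  have h2 : ∀ i ∈ Finset.univ, Complex.normSq (y i) = 0 :=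
    (Finset.sum_eq_zero_iff_of_nonneg (fun i _ => Complex.normSq_nonneg _)).mp h
  ext i
  exact Complex.normSq_eq_zero.mp (h2 i (Finset.mem_univ i))

lemma toEuclideanLin_coord {m : Type*} [Fintype m] (A : Matrix m ι ℂ) (c : EuclideanSpace ℂ ι)
    (i : m) : (Matrix.toEuclideanLin A c) i = ∑ j, A i j * c j :=
  rfl

lemma toEuclideanLin_mul_apply {m d : Type*} [Fintype m] [DecidableEq m]
    (M : Matrix d m ℂ) (N : Matrix m ι ℂ) (x : EuclideanSpace ℂ ι) :
    Matrix.toEuclideanLin (M * N) x = Matrix.toEuclideanLin M (Matrix.toEuclideanLin N x) := by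
  rw [Matrix.toEuclideanLin_apply, Matrix.toEuclideanLin_apply, Matrix.toEuclideanLin_apply,
    WithLp.ofLp_toLp, Matrix.mulVec_mulVec]

end Forms

noncomputable section GraphForms
variable {n : ℕ} (T : SimpleGraph (Fin n)) [Fintype T.edgeSet] [DecidableRel T.Adj]

local notation "⟪" x ", " y "⟫" => @inner ℂ _ _ x y

/-- Subspace of edge-space functions supported on the matching edges. -/
def W2mod (SM : Finset T.edgeSet) : Submodule ℂ (EuclideanSpace ℂ T.edgeSet) :=
  spanOB (EuclideanSpace.basisFun T.edgeSet ℂ) SM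

lemma W2_supp {SM : Finset T.edgeSet} {c : EuclideanSpace ℂ T.edgeSet}
    (hc : c ∈ W2mod T SM) {e : T.edgeSet} (he : e ∉ SM) : c e = 0 := by
  have := repr_eq_zero_of_mem_spanOB _ _ hc he
  rwa [EuclideanSpace.basisFun_repr] at this

lemma W2_finrank (SM : Finset T.edgeSet) : Module.finrank ℂ (W2mod T SM) = SM.card :=
  finrank_spanOB _ _

section SM2
variable (SM : Finset T.edgeSet)
  (hdisj : ∀ e ∈ SM, ∀ f ∈ SM, e ≠ f →
    ∀ w : Fin n, ¬(w ∈ (e : T.edgeSet).val ∧ w ∈ (f : T.edgeSet).val))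

include hdisj in
lemma TAE_coord {c : EuclideanSpace ℂ T.edgeSet} (hc : c ∈ W2mod T SM)
    {e : T.edgeSet} (he : e ∈ SM) :
    (Matrix.toEuclideanLin ((Bmat T)ᴴ * Bmat T) c) e = 2 * c e := by
  rw [toEuclideanLin_coord]
  rw [Finset.sum_eq_single e]
  · rw [Amat_diag]
  · intro f _ hfe
    by_cases hf : f ∈ SM
    · rw [Amat_off T e f (hdisj e he f hf (Ne.symm hfe)), zero_mul]
    · rw [W2_supp T hc hf, mul_zero]
  · intro h
    exact absurd (Finset.mem_univ e) h

include hdisj in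
lemma formAE {c : EuclideanSpace ℂ T.edgeSet} (hc : c ∈ W2mod T SM) :
    (⟪c, Matrix.toEuclideanLin ((Bmat T)ᴴ * Bmat T) c⟫).re = 2 * (⟪c, c⟫).re := by
  rw [PiLp.inner_apply, Complex.re_sum, reInnerSelf]
  rw [← Finset.sum_subset (Finset.subset_univ SM) (f := fun e =>
      (@inner ℂ _ _ (c e) ((Matrix.toEuclideanLin ((Bmat T)ᴴ * Bmat T) c) e)).re)]
  · rw [← Finset.sum_subset (Finset.subset_univ SM) (f := fun e => Complex.normSq (c e))]
    · rw [Finset.mul_sum]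
      apply Finset.sum_congr rfl
      intro e he
      rw [RCLike.inner_apply, TAE_coord T SM hdisj hc he]
      have : (starRingEnd ℂ) (c e) * (2 * c e)
          = ((2 * Complex.normSq (c e) : ℝ) : ℂ) := by
        rw [Complex.ofReal_mul, Complex.normSq_eq_conj_mul_self]
        push_cast
        ring
      rw [mul_comm, this, Complex.ofReal_re]
    · intro e _ he
      rw [W2_supp T hc he]
      simp
  · intro e _ he
    rw [RCLike.inner_apply, W2_supp T hc he]
    simp

/-- The image subspace `W1` in vertex space. -/
def W1mod : Submodule ℂ (EuclideanSpace ℂ (Fin n)) :=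
  Submodule.map (Matrix.toEuclideanLin (Bmat T)) (W2mod T SM)

lemma inner_TB (c z : EuclideanSpace ℂ T.edgeSet) :
    ⟪Matrix.toEuclideanLin (Bmat T) c, Matrix.toEuclideanLin (Bmat T) z⟫
      = ⟪c, Matrix.toEuclideanLin ((Bmat T)ᴴ * Bmat T) z⟫ := by
  rw [toEuclideanLin_mul_apply, Matrix.toEuclideanLin_conjTranspose_eq_adjoint]
  rw [LinearMap.adjoint_inner_right]

lemma inner_TB' (c z : EuclideanSpace ℂ T.edgeSet) :
    ⟪Matrix.toEuclideanLin (Bmat T) c, Matrix.toEuclideanLin (Bmat T) z⟫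
      = ⟪Matrix.toEuclideanLin ((Bmat T)ᴴ * Bmat T) c, z⟫ := by
  rw [toEuclideanLin_mul_apply, Matrix.toEuclideanLin_conjTranspose_eq_adjoint]
  rw [LinearMap.adjoint_inner_left]

include hdisj in
lemma formL_W1 : ∀ x ∈ W1mod T SM, 2 * (⟪x, x⟫).re
    ≤ (⟪x, Matrix.toEuclideanLin (Bmat T * (Bmat T)ᴴ) x⟫).re := by
  rintro x ⟨c, hc, rfl⟩
  have h1 : Matrix.toEuclideanLin (Bmat T * (Bmat T)ᴴ) (Matrix.toEuclideanLin (Bmat T) c)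
      = Matrix.toEuclideanLin (Bmat T)
        (Matrix.toEuclideanLin ((Bmat T)ᴴ * Bmat T) c) := by
    rw [← toEuclideanLin_mul_apply, ← toEuclideanLin_mul_apply, Matrix.mul_assoc]
  have h2 : (⟪Matrix.toEuclideanLin (Bmat T) c, Matrix.toEuclideanLin (Bmat T) c⟫).re
      = 2 * (⟪c, c⟫).re := by
    rw [inner_TB T, formAE T SM hdisj hc]
  rw [h1, h2, inner_TB' T c (Matrix.toEuclideanLin ((Bmat T)ᴴ * Bmat T) c)]
  rw [reInnerSelf, reInnerSelf]
  have h4 : ∑ e, Complex.normSq (c e) = ∑ e ∈ SM, Complex.normSq (c e) := by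
    symm
    apply Finset.sum_subset (Finset.subset_univ SM)
    intro e _ he
    rw [W2_supp T hc he]
    simp
  have h5 : ∑ e ∈ SM, Complex.normSq ((Matrix.toEuclideanLin ((Bmat T)ᴴ * Bmat T) c) e)
      ≤ ∑ e, Complex.normSq ((Matrix.toEuclideanLin ((Bmat T)ᴴ * Bmat T) c) e) :=
    Finset.sum_le_sum_of_subset_of_nonneg (Finset.subset_univ SM)
      (fun e _ _ => Complex.normSq_nonneg _)
  have h6 : ∑ e ∈ SM, Complex.normSq ((Matrix.toEuclideanLin ((Bmat T)ᴴ * Bmat T) c) e)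
      = ∑ e ∈ SM, 4 * Complex.normSq (c e) := by
    apply Finset.sum_congr rfl
    intro e he
    rw [TAE_coord T SM hdisj hc he, Complex.normSq_mul]
    norm_num [Complex.normSq_apply]
  rw [h4]
  rw [h6] at h5
  have h7 : 2 * (2 * ∑ e ∈ SM, Complex.normSq (c e))
      = ∑ e ∈ SM, 4 * Complex.normSq (c e) := by
    rw [Finset.mul_sum, Finset.mul_sum]
    apply Finset.sum_congr rfl
    intro e _
    ring
  rw [h7]
  exact h5

include hdisj in
lemma finrank_W1 : Module.finrank ℂ (W1mod T SM) = SM.card := by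
  have hker : LinearMap.ker ((Matrix.toEuclideanLin (Bmat T)).domRestrict (W2mod T SM)) = ⊥ := by
    rw [LinearMap.ker_eq_bot']
    intro m hm
    have hm' : Matrix.toEuclideanLin (Bmat T) (m : EuclideanSpace ℂ T.edgeSet) = 0 := hm
    have h0 : (⟪Matrix.toEuclideanLin (Bmat T) (m : EuclideanSpace ℂ T.edgeSet),
        Matrix.toEuclideanLin (Bmat T) (m : EuclideanSpace ℂ T.edgeSet)⟫).re = 0 := by
      rw [hm']
      simp
    rw [inner_TB T, formAE T SM hdisj m.prop] at h0
    have hz : (m : EuclideanSpace ℂ T.edgeSet) = 0 := innerSelf_zero (by linarith)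
    exact Subtype.ext hz
  have hrn := LinearMap.finrank_range_add_finrank_ker
    ((Matrix.toEuclideanLin (Bmat T)).domRestrict (W2mod T SM))
  rw [hker, finrank_bot, add_zero, LinearMap.range_domRestrict] at hrn
  rw [W1mod, hrn]
  exact W2_finrank T SM

end SM2
end GraphForms

lemma card_filter_comp_perm {N : ℕ} (f : Fin N → ℝ) (σ : Equiv.Perm (Fin N))
    (p : ℝ → Prop) [DecidablePred p] :
    (Finset.univ.filter fun i => p (f (σ i))).card
      = (Finset.univ.filter fun i => p (f i)).card := by
  apply Finset.card_bij (fun i _ => σ i)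
  · intro a ha
    simp only [Finset.mem_filter, Finset.mem_univ, true_and] at ha ⊢
    exact ha
  · intro a _ b _ h
    exact σ.injective h
  · intro b hb
    simp only [Finset.mem_filter, Finset.mem_univ, true_and] at hb
    exact ⟨σ.symm b, by simp [hb], by simp⟩

/-- A tree on `n` vertices with a perfect matching has `n` even and
`λ_{n/2+1}(Δ^T) = 2` for the combinatorial Laplacian. -/
theorem matchable_tree_eigenvalue {n : ℕ} (T : SimpleGraph (Fin n)) (hT : T.IsTree)
    (hM : ∃ M : T.Subgraph, M.IsPerfectMatching) :
    Even n ∧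
      lamb (magLap_isHermitian T (fun _ _ => (0 : ℝ)) (fun _ _ => neg_zero.symm)) (n / 2 + 1) = ((2 : ℝ) : EReal) := by
  classical
  obtain ⟨M, hPM⟩ := hM
  letI : DecidableRel T.Adj := Classical.decRel _
  set hL := magLap_isHermitian T (fun _ _ => (0 : ℝ)) (fun _ _ => neg_zero.symm) with hhL
  set SM : Finset T.edgeSet := Finset.univ.filter
      (fun e : T.edgeSet => (e : Sym2 (Fin n)) ∈ M.edgeSet) with hSM
  have huniq := (SimpleGraph.Subgraph.isPerfectMatching_iff).mp hPM
  have hcov : ∀ v : Fin n, ∃ e ∈ SM, v ∈ (e : T.edgeSet).val := by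
    intro v
    obtain ⟨w, hw, -⟩ := huniq v
    have h1 : s(v, w) ∈ T.edgeSet := T.mem_edgeSet.mpr (M.adj_sub hw)
    refine ⟨⟨s(v, w), h1⟩, ?_, Sym2.mem_mk_left v w⟩
    rw [hSM]
    simp only [Finset.mem_filter, Finset.mem_univ, true_and]
    exact SimpleGraph.Subgraph.mem_edgeSet.mpr hw
  have hdisj : ∀ e ∈ SM, ∀ f ∈ SM, e ≠ f →
      ∀ w : Fin n, ¬(w ∈ (e : T.edgeSet).val ∧ w ∈ (f : T.edgeSet).val) := by
    rintro e he f hf hef w ⟨hwe, hwf⟩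
    rw [hSM, Finset.mem_filter] at he hf
    obtain ⟨a, ha⟩ := Sym2.mem_iff_exists.mp hwe
    obtain ⟨b, hb⟩ := Sym2.mem_iff_exists.mp hwf
    have hMa : M.Adj w a := SimpleGraph.Subgraph.mem_edgeSet.mp (ha ▸ he.2)
    have hMb : M.Adj w b := SimpleGraph.Subgraph.mem_edgeSet.mp (hb ▸ hf.2)
    obtain ⟨c, -, hcu⟩ := huniq w
    have hab : a = b := (hcu a hMa).trans (hcu b hMb).symm
    exact hef (Subtype.ext (by rw [ha, hb, hab]))
  have hn2 : n = 2 * SM.card := card_SM T SM hcov hdisj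
  have hn0 : 0 < n := Fin.pos_iff_nonempty.mpr hT.isConnected.nonempty
  set m := SM.card with hm
  have hm1 : 1 ≤ m := by omega
  have hcardE : Fintype.card T.edgeSet = n - 1 := card_edgeSet_tree T hT
  have hmat : magLap T (fun _ _ => (0 : ℝ)) = Bmat T * (Bmat T)ᴴ := magLap0_eq T
  have hAE : ((Bmat T)ᴴ * Bmat T).IsHermitian := Matrix.isHermitian_conjTranspose_mul_self _
  -- count of eigenvalues of L below 2
  have hform1 : ∀ x ∈ W1mod T SM, 2 * ((inner ℂ x x : ℂ)).re
      ≤ ((inner ℂ x (Matrix.toEuclideanLin (magLap T fun _ _ => (0 : ℝ)) x) : ℂ)).re := by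
    intro x hx
    rw [hmat]
    exact formL_W1 T SM hdisj x hx
  have hc1 := count_lt hL (W1mod T SM) 2 hform1
  rw [finrank_W1 T SM hdisj, Fintype.card_fin] at hc1
  -- count of eigenvalues of the edge matrix above 2
  have hform2 : ∀ c ∈ W2mod T SM,
      ((inner ℂ c (Matrix.toEuclideanLin ((Bmat T)ᴴ * Bmat T) c) : ℂ)).re
        ≤ 2 * ((inner ℂ c c : ℂ)).re := by
    intro c hc
    rw [formAE T SM hdisj hc]
  have hc2 := count_gt hAE (W2mod T SM) 2 hform2
  rw [W2_finrank T SM] at hc2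
  -- the transfer subspace W3
  set Sgt := Finset.univ.filter (fun i => 2 < hL.eigenvalues i) with hSgt
  set EL := spanOB hL.eigenvectorBasis Sgt with hEL
  set W3 := Submodule.map (Matrix.toEuclideanLin (Bmat T)ᴴ) EL with hW3
  have hadjB : Matrix.toEuclideanLin (Bmat T)ᴴ
      = LinearMap.adjoint (Matrix.toEuclideanLin (Bmat T)) :=
    Matrix.toEuclideanLin_conjTranspose_eq_adjoint _
  have hTLmul : ∀ x : EuclideanSpace ℂ (Fin n),
      Matrix.toEuclideanLin (magLap T fun _ _ => (0 : ℝ)) x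
        = Matrix.toEuclideanLin (Bmat T) (Matrix.toEuclideanLin (Bmat T)ᴴ x) := by
    intro x
    rw [hmat, toEuclideanLin_mul_apply]
  have hkey1 : ∀ x : EuclideanSpace ℂ (Fin n),
      (inner ℂ (Matrix.toEuclideanLin (Bmat T)ᴴ x) (Matrix.toEuclideanLin (Bmat T)ᴴ x) : ℂ)
        = (inner ℂ x (Matrix.toEuclideanLin (magLap T fun _ _ => (0 : ℝ)) x) : ℂ) := by
    intro x
    rw [hTLmul, hadjB]
    exact LinearMap.adjoint_inner_left _ _ _
  have hkey2 : ∀ x : EuclideanSpace ℂ (Fin n),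
      (inner ℂ (Matrix.toEuclideanLin (Bmat T)ᴴ x)
        (Matrix.toEuclideanLin ((Bmat T)ᴴ * Bmat T) (Matrix.toEuclideanLin (Bmat T)ᴴ x)) : ℂ)
      = (inner ℂ (Matrix.toEuclideanLin (magLap T fun _ _ => (0 : ℝ)) x)
          (Matrix.toEuclideanLin (magLap T fun _ _ => (0 : ℝ)) x) : ℂ) := by
    intro x
    rw [toEuclideanLin_mul_apply, hadjB, LinearMap.adjoint_inner_right, ← hadjB, ← hTLmul]
  have hform3 : ∀ y ∈ W3, y ≠ 0 → 2 * ((inner ℂ y y : ℂ)).re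
      < ((inner ℂ y (Matrix.toEuclideanLin ((Bmat T)ᴴ * Bmat T) y) : ℂ)).re := by
    rintro y ⟨x, hx, rfl⟩ hy0
    have hx0 : x ≠ 0 := by
      rintro rfl
      exact hy0 (map_zero _)
    rw [hkey1 x, hkey2 x, E2 hL Sgt hx, E3' hL Sgt hx]
    obtain ⟨i0, hi0, hni⟩ := E4 hL Sgt hx hx0
    rw [Finset.mul_sum]
    apply Finset.sum_lt_sum
    · intro i hi
      have h2i : 2 < hL.eigenvalues i := (Finset.mem_filter.mp hi).2
      have hkey : 0 ≤ hL.eigenvalues i * ((hL.eigenvalues i - 2)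
          * Complex.normSq (hL.eigenvectorBasis.repr x i)) :=
        mul_nonneg (by linarith) (mul_nonneg (by linarith) (Complex.normSq_nonneg _))
      nlinarith [hkey]
    · refine ⟨i0, hi0, ?_⟩
      have h2i : 2 < hL.eigenvalues i0 := (Finset.mem_filter.mp hi0).2
      have hkey : 0 < hL.eigenvalues i0 * ((hL.eigenvalues i0 - 2)
          * Complex.normSq (hL.eigenvectorBasis.repr x i0)) :=
        mul_pos (by linarith) (mul_pos (by linarith) (Complex.normSq_pos.mpr hni))
      nlinarith [hkey]
  have hfr3 : Module.finrank ℂ W3 = Sgt.card := by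
    have hker : LinearMap.ker ((Matrix.toEuclideanLin (Bmat T)ᴴ).domRestrict EL) = ⊥ := by
      rw [LinearMap.ker_eq_bot']
      intro z hz
      have hz' : Matrix.toEuclideanLin (Bmat T)ᴴ (z : EuclideanSpace ℂ (Fin n)) = 0 := hz
      by_contra hz0
      have hzz : (z : EuclideanSpace ℂ (Fin n)) ≠ 0 := fun hc => hz0 (Subtype.ext hc)
      have h0 : ((inner ℂ (Matrix.toEuclideanLin (Bmat T)ᴴ (z : EuclideanSpace ℂ (Fin n)))
          (Matrix.toEuclideanLin (Bmat T)ᴴ (z : EuclideanSpace ℂ (Fin n))) : ℂ)).re = 0 := by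
        rw [hz']
        simp
      rw [hkey1, E2 hL Sgt z.prop] at h0
      obtain ⟨i0, hi0, hni⟩ := E4 hL Sgt z.prop hzz
      have hpos : 0 < ∑ i ∈ Sgt,
          hL.eigenvalues i * Complex.normSq (hL.eigenvectorBasis.repr
            (z : EuclideanSpace ℂ (Fin n)) i) := by
        apply Finset.sum_pos'
        · intro i hi
          have h2i : 2 < hL.eigenvalues i := (Finset.mem_filter.mp hi).2
          exact mul_nonneg (by linarith) (Complex.normSq_nonneg _)
        · refine ⟨i0, hi0, ?_⟩
          have h2i : 2 < hL.eigenvalues i0 := (Finset.mem_filter.mp hi0).2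
          exact mul_pos (by linarith) (Complex.normSq_pos.mpr hni)
      linarith
    have hrn := LinearMap.finrank_range_add_finrank_ker
      ((Matrix.toEuclideanLin (Bmat T)ᴴ).domRestrict EL)
    rw [hker, finrank_bot, add_zero, LinearMap.range_domRestrict] at hrn
    rw [hW3, hrn, hEL]
    exact finrank_spanOB _ _
  have hc3 := count_le hAE W3 2 hform3
  rw [hfr3] at hc3
  -- partition of edge eigenvalues
  have hpart : (Finset.univ.filter fun j => hAE.eigenvalues j ≤ 2).card
      + (Finset.univ.filter fun j => 2 < hAE.eigenvalues j).card
      = Fintype.card T.edgeSet := by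
    have h := Finset.card_filter_add_card_filter_not
      (s := Finset.univ) (p := fun j => hAE.eigenvalues j ≤ 2)
    have h2 : Finset.univ.filter (fun j => ¬ hAE.eigenvalues j ≤ 2)
        = Finset.univ.filter (fun j => 2 < hAE.eigenvalues j) := by
      apply Finset.filter_congr
      intro j _
      simp [not_le]
    rw [h2, Finset.card_univ] at h
    exact h
  -- the number of eigenvalues of L greater than 2
  have hSgtc : Sgt.card = (Finset.univ.filter fun i => 2 < hL.eigenvalues i).card := by
    rw [hSgt]
  have hSgtle : Sgt.card + m ≤ n - 1 := by
    omega
  -- monotone sorted eigenvalues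
  have hmono := Tuple.monotone_sort hL.eigenvalues
  have hLt2 : (Finset.univ.filter fun i =>
      hL.eigenvalues (Tuple.sort hL.eigenvalues i) < 2).card ≤ m := by
    rw [card_filter_comp_perm hL.eigenvalues (Tuple.sort hL.eigenvalues) (fun x => x < 2)]
    omega
  have hGt2 : (Finset.univ.filter fun i =>
      2 < hL.eigenvalues (Tuple.sort hL.eigenvalues i)).card + m ≤ n - 1 := by
    rw [card_filter_comp_perm hL.eigenvalues (Tuple.sort hL.eigenvalues) (fun x => 2 < x)]
    omega
  have hnlt : n / 2 < n := by omega
  have hsle : hL.eigenvalues (Tuple.sort hL.eigenvalues ⟨n / 2, hnlt⟩) ≤ 2 := by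
    by_contra hgt
    push_neg at hgt
    have hsub : Finset.Ici (⟨n / 2, hnlt⟩ : Fin n) ⊆ Finset.univ.filter fun i =>
        2 < hL.eigenvalues (Tuple.sort hL.eigenvalues i) := by
      intro j hj
      rw [Finset.mem_filter]
      exact ⟨Finset.mem_univ _, lt_of_lt_of_le hgt (hmono (Finset.mem_Ici.mp hj))⟩
    have hcard := Finset.card_le_card hsub
    rw [Fin.card_Ici] at hcard
    simp only at hcard
    omega
  have hsge : 2 ≤ hL.eigenvalues (Tuple.sort hL.eigenvalues ⟨n / 2, hnlt⟩) := by
    by_contra hlt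
    push_neg at hlt
    have hsub : Finset.Iic (⟨n / 2, hnlt⟩ : Fin n) ⊆ Finset.univ.filter fun i =>
        hL.eigenvalues (Tuple.sort hL.eigenvalues i) < 2 := by
      intro j hj
      rw [Finset.mem_filter]
      exact ⟨Finset.mem_univ _, lt_of_le_of_lt (hmono (Finset.mem_Iic.mp hj)) hlt⟩
    have hcard := Finset.card_le_card hsub
    rw [Fin.card_Iic] at hcard
    simp only at hcard
    omega
  have hval : hL.eigenvalues (Tuple.sort hL.eigenvalues ⟨n / 2, hnlt⟩) = 2 :=
    le_antisymm hsle hsge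
  constructor
  · exact ⟨m, by omega⟩
  · rw [lamb, dif_pos (show 1 ≤ n / 2 + 1 ∧ n / 2 + 1 ≤ n by omega)]
    have hidx : (⟨n / 2 + 1 - 1, by omega⟩ : Fin n) = ⟨n / 2, hnlt⟩ := by
      apply Fin.ext
      simp
    rw [show ((hL.eigenvalues ∘ Tuple.sort hL.eigenvalues) ⟨n / 2 + 1 - 1, by omega⟩ : ℝ)
        = (2 : ℝ) by rw [Function.comp_apply, hidx, hval]]
end
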